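/- (The sup metric on rational step functions) The function d∞ f g := ‖map2 (·−·) f g‖∞ on S ℚ satisfies the axioms of a metric with respect to the lifted equality ≍: for all f, g, h : S ℚ, (i) 0 ≤ d∞ f g; (ii) d∞ f f = 0; (iii) d∞ f g = d∞ g f; (iv) d∞ f h ≤ d∞ f g + d∞ g h; and (v) d∞ f g = 0 → f ≍ g. -/

import Mathlib

set_option linter.unusedVariables false

/-- Rationals strictly between 0 and 1. -/
abbrev OO : Type := {q : ℚ // 0 < q ∧ q < 1}

/-- Rational step functions on the unit interval with values in `X`. -/
inductive S (X : Type) : Type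
  | const : X → S X
  | glue : OO → S X → S X → S X

namespace S

def divO (a o : OO) (h : a.1 < o.1) : OO :=
  ⟨a.1 / o.1, div_pos a.2.1 o.2.1, (div_lt_one o.2.1).2 h⟩

def subO (a o : OO) (h : o.1 < a.1) : OO :=
  ⟨(a.1 - o.1) / (1 - o.1),
    div_pos (by linarith) (by linarith [o.2.2]),
    (div_lt_one (by linarith [o.2.2])).2 (by linarith [a.2.2])⟩

/-- Left split: the part of the step function on `[0,a]`, rescaled to `[0,1]`. -/
def splitL {X : Type} : S X → OO → S X
  | const x, _ => const x
  | glue o f g, a =>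
      if h : a.1 < o.1 then splitL f (divO a o h)
      else if h' : o.1 < a.1 then glue (divO o a h') f (splitL g (subO a o h'))
      else f

/-- Right split: the part of the step function on `[a,1]`, rescaled to `[0,1]`. -/
def splitR {X : Type} : S X → OO → S X
  | const x, _ => const x
  | glue o f g, a =>
      if h : a.1 < o.1 then glue (subO o a h) (splitR f (divO a o h)) g
      else if h' : o.1 < a.1 then splitR g (subO a o h')
      else g

/-- The catamorphism (fold) for step functions. -/
def fold {X Y : Type} (φ : X → Y) (ψ : OO → Y → Y → Y) : S X → Y
  | const x => φ x
  | glue o f g => ψ o (fold φ ψ f) (fold φ ψ g)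

/-- `map` for step functions. -/
def mapS {X Y : Type} (f : X → Y) : S X → S Y
  | const x => const (f x)
  | glue o l r => glue o (mapS f l) (mapS f r)

/-- The applicative `ap` (pointwise application) for step functions. -/
def ap {X Y : Type} : S (X → Y) → S X → S Y
  | const f, x => mapS f x
  | glue o fl fr, x => glue o (ap fl (splitL x o)) (ap fr (splitR x o))

/-- Binary map. -/
def map2 {X Y Z : Type} (f : X → Y → Z) (a : S X) (b : S Y) : S Z :=
  ap (mapS f a) b

/-- `fold⋆`: a step function of propositions holds everywhere. -/
def foldStar : S Prop → Prop := fold id (fun _ p q => p ∧ q)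

/-- Lifting of a relation to step functions: it holds pointwise everywhere. -/
def liftRel {X Y : Type} (R : X → Y → Prop) (f : S X) (g : S Y) : Prop :=
  foldStar (map2 R f g)

/-- The equivalence `≍` on step functions: the lifting of equality. -/
def equivS {X : Type} (f g : S X) : Prop := liftRel Eq f g

def foldSup : S ℚ → ℚ := fold id (fun _ x y => max x y)

def foldAffine : S ℚ → ℚ := fold id (fun o x y => o.1 * x + (1 - o.1) * y)

def normInf (f : S ℚ) : ℚ := foldSup (mapS (fun q => |q|) f)

def normOne (f : S ℚ) : ℚ := foldAffine (mapS (fun q => |q|) f)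

def dInf (f g : S ℚ) : ℚ := normInf (map2 (· - ·) f g)

def dOne (f g : S ℚ) : ℚ := normOne (map2 (· - ·) f g)

end S

open S

def eval {X : Type} : S X → ℚ → X
  | const x, _ => x
  | glue o l r, t => if t ≤ o.1 then eval l (t / o.1) else eval r ((t - o.1) / (1 - o.1))

lemma eval_mapS {X Y : Type} (h : X → Y) (x : S X) (t : ℚ) :
    eval (mapS h x) t = h (eval x t) := by
  induction x generalizing t with
  | const x => rfl
  | glue o l r ihl ihr =>
    simp only [mapS, eval]
    split
    · exact ihl _
    · exact ihr _

lemma eval_splitL {X : Type} (x : S X) (a : OO) (t : ℚ) (h0 : 0 < t) (h1 : t ≤ 1) :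
    eval (splitL x a) t = eval x (t * a.1) := by
  induction x generalizing a t with
  | const x => rfl
  | glue o l r ihl ihr =>
    obtain ⟨ha0, ha1⟩ := a.2
    obtain ⟨ho0, ho1⟩ := o.2
    rcases lt_trichotomy a.1 o.1 with hc | hc | hc
    · rw [splitL, dif_pos hc, ihl _ _ h0 h1]
      simp only [eval, divO]
      rw [if_pos (by nlinarith), mul_div_assoc]
    · rw [splitL, dif_neg (not_lt.2 hc.le), dif_neg (not_lt.2 hc.ge)]
      simp only [eval]
      rw [if_pos (by nlinarith)]
      rw [hc, mul_div_assoc, div_self (ne_of_gt ho0), mul_one]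
    · rw [splitL, dif_neg (not_lt.2 hc.le), dif_pos hc]
      simp only [eval, divO, subO]
      by_cases hto : t ≤ o.1 / a.1
      · simp only [hto, ↓reduceIte]
        rw [if_pos ((le_div_iff₀ ha0).1 hto), div_div_eq_mul_div]
      · simp only [hto, ↓reduceIte]
        rw [if_neg (fun hh => hto ((le_div_iff₀ ha0).2 hh))]
        push_neg at hto
        have h1' : o.1 / a.1 < 1 := (div_lt_one ha0).2 hc
        rw [ihr _ _ (div_pos (by linarith) (by linarith)) (by
          rw [div_le_one (by linarith)]; linarith)]
        congr 1
        have ha' : a.1 ≠ 0 := ne_of_gt ha0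
        have ho' : (1:ℚ) - o.1 ≠ 0 := by linarith
        have h2 : (1 - o.1/a.1) * (1 - o.1) ≠ 0 := by
          apply mul_ne_zero <;> [skip; exact ho']
          have : o.1/a.1 < 1 := (div_lt_one ha0).2 hc
          linarith
        rw [div_mul_div_comm, div_eq_div_iff h2 ho']
        field_simp

lemma eval_splitR {X : Type} (x : S X) (a : OO) (t : ℚ) (h0 : 0 < t) (h1 : t ≤ 1) :
    eval (splitR x a) t = eval x (a.1 + t * (1 - a.1)) := by
  induction x generalizing a t with
  | const x => rfl
  | glue o l r ihl ihr =>
    obtain ⟨ha0, ha1⟩ := a.2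
    obtain ⟨ho0, ho1⟩ := o.2
    have h1a : (0:ℚ) < 1 - a.1 := by linarith
    have h1o : (0:ℚ) < 1 - o.1 := by linarith
    rcases lt_trichotomy a.1 o.1 with hc | hc | hc
    · rw [splitR, dif_pos hc]
      simp only [eval, subO]
      have hth : (0:ℚ) < (o.1 - a.1) / (1 - a.1) := div_pos (by linarith) h1a
      by_cases hto : t ≤ (o.1 - a.1) / (1 - a.1)
      · simp only [hto, ↓reduceIte]
        rw [if_pos (by
          rw [le_div_iff₀ h1a] at hto; linarith)]
        rw [ihl _ _ (div_pos h0 hth) (by rw [div_le_one hth]; linarith)]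
        simp only [divO]
        congr 1
        have ho' : o.1 ≠ 0 := ne_of_gt ho0
        have hoa : o.1 - a.1 ≠ 0 := by intro hz; linarith
        field_simp
        try ring
      · simp only [hto, ↓reduceIte]
        rw [if_neg (by
          intro hh; exact hto (by rw [le_div_iff₀ h1a]; linarith))]
        congr 1
        have hd : (1:ℚ) - (o.1 - a.1)/(1 - a.1) ≠ 0 := by
          have : (o.1 - a.1)/(1-a.1) < 1 := (div_lt_one h1a).2 (by linarith)
          intro hz; linarith
        rw [div_eq_div_iff hd (ne_of_gt h1o)]
        field_simp
        try ring
        try tauto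
    · rw [splitR, dif_neg (not_lt.2 hc.le), dif_neg (not_lt.2 hc.ge)]
      simp only [eval]
      rw [if_neg (by rw [hc]; nlinarith)]
      congr 1
      rw [hc]
      field_simp
      ring
    · rw [splitR, dif_neg (not_lt.2 hc.le), dif_pos hc, ihr _ _ h0 h1]
      simp only [eval, subO]
      rw [if_neg (by nlinarith)]
      congr 1
      field_simp
      ring

lemma eval_ap {X Y : Type} (fs : S (X → Y)) (x : S X) (t : ℚ) (h0 : 0 < t) (h1 : t ≤ 1) :
    eval (ap fs x) t = eval fs t (eval x t) := by
  induction fs generalizing x t with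
  | const f => simp only [ap, eval_mapS, eval]
  | glue o fl fr ihl ihr =>
    obtain ⟨ho0, ho1⟩ := o.2
    simp only [ap, eval]
    by_cases hto : t ≤ o.1
    · rw [if_pos hto, if_pos hto]
      rw [ihl _ _ (div_pos h0 ho0) ((div_le_one ho0).2 hto)]
      rw [eval_splitL _ _ _ (div_pos h0 ho0) ((div_le_one ho0).2 hto)]
      rw [div_mul_cancel₀ _ (ne_of_gt ho0)]
    · rw [if_neg hto, if_neg hto]
      push_neg at hto
      have ht0 : 0 < (t - o.1) / (1 - o.1) := div_pos (by linarith) (by linarith)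
      have ht1 : (t - o.1) / (1 - o.1) ≤ 1 := by
        rw [div_le_one (by linarith)]; linarith
      rw [ihr _ _ ht0 ht1, eval_splitR _ _ _ ht0 ht1]
      congr 2
      have : (1:ℚ) - o.1 ≠ 0 := by intro hz; linarith
      field_simp
      rw [add_sub_cancel]

lemma eval_map2 {X Y Z : Type} (R : X → Y → Z) (a : S X) (b : S Y) (t : ℚ)
    (h0 : 0 < t) (h1 : t ≤ 1) :
    eval (map2 R a b) t = R (eval a t) (eval b t) := by
  rw [map2, eval_ap _ _ _ h0 h1, eval_mapS]

lemma eval_le_foldSup (f : S ℚ) (t : ℚ) (h0 : 0 < t) (h1 : t ≤ 1) :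
    eval f t ≤ foldSup f := by
  induction f generalizing t with
  | const q => exact le_refl q
  | glue o l r ihl ihr =>
    obtain ⟨ho0, ho1⟩ := o.2
    simp only [eval, foldSup, fold]
    split
    · exact le_max_of_le_left (ihl _ (div_pos h0 ho0) ((div_le_one ho0).2 (by assumption)))
    · rename_i hto
      push_neg at hto
      exact le_max_of_le_right (ihr _ (div_pos (by linarith) (by linarith))
        (by rw [div_le_one (by linarith)]; linarith))

lemma foldSup_attained (f : S ℚ) : ∃ t : ℚ, 0 < t ∧ t ≤ 1 ∧ eval f t = foldSup f := by
  induction f with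
  | const q => exact ⟨1, one_pos, le_refl 1, rfl⟩
  | glue o l r ihl ihr =>
    obtain ⟨ho0, ho1⟩ := o.2
    rcases le_total (foldSup r) (foldSup l) with hm | hm
    · obtain ⟨t, ht0, ht1, ht⟩ := ihl
      refine ⟨t * o.1, mul_pos ht0 ho0, by nlinarith, ?_⟩
      simp only [eval, foldSup, fold]
      rw [if_pos (by nlinarith), mul_div_cancel_right₀ _ (ne_of_gt ho0), ht]
      exact (max_eq_left hm).symm
    · obtain ⟨t, ht0, ht1, ht⟩ := ihr
      refine ⟨o.1 + t * (1 - o.1), by nlinarith, by nlinarith, ?_⟩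
      simp only [eval, foldSup, fold]
      rw [if_neg (by nlinarith)]
      have : (↑o + t * (1 - ↑o) - ↑o) / (1 - ↑o) = t := by
        rw [add_sub_cancel_left, mul_div_cancel_right₀ _ (show (1:ℚ) - o.1 ≠ 0 by intro hz; linarith)]
      rw [this, ht]
      exact (max_eq_right hm).symm

lemma foldStar_of_eval (P : S Prop) (hP : ∀ t : ℚ, 0 < t → t ≤ 1 → eval P t) :
    foldStar P := by
  induction P with
  | const p => exact hP 1 one_pos le_rfl
  | glue o l r ihl ihr =>
    obtain ⟨ho0, ho1⟩ := o.2
    constructor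
    · apply ihl
      intro t ht0 ht1
      have := hP (t * o.1) (mul_pos ht0 ho0) (by nlinarith)
      simpa only [eval, if_pos (show t * o.1 ≤ o.1 by nlinarith),
        mul_div_cancel_right₀ _ (ne_of_gt ho0)] using this
    · apply ihr
      intro t ht0 ht1
      have := hP (o.1 + t * (1 - o.1)) (by nlinarith) (by nlinarith)
      have e : (↑o + t * (1 - ↑o) - ↑o) / (1 - ↑o) = t := by rw [add_sub_cancel_left, mul_div_cancel_right₀ _ (show (1:ℚ) - o.1 ≠ 0 by intro hz; linarith)]
      simpa only [eval, if_neg (show ¬ o.1 + t * (1 - o.1) ≤ o.1 by push_neg; nlinarith),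
        e] using this

lemma abs_eval_le_normInf (f : S ℚ) (t : ℚ) (h0 : 0 < t) (h1 : t ≤ 1) :
    |eval f t| ≤ normInf f := by
  have := eval_le_foldSup (mapS (fun q => |q|) f) t h0 h1
  rwa [eval_mapS] at this

lemma normInf_attained (f : S ℚ) : ∃ t : ℚ, 0 < t ∧ t ≤ 1 ∧ |eval f t| = normInf f := by
  obtain ⟨t, h0, h1, ht⟩ := foldSup_attained (mapS (fun q => |q|) f)
  rw [eval_mapS] at ht
  exact ⟨t, h0, h1, ht⟩


/-- The sup metric `d∞` on rational step functions satisfies the metric axioms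
with respect to the lifted equality. -/
theorem dInf_is_metric (f g h : S ℚ) :
    0 ≤ dInf f g ∧
    dInf f f = 0 ∧
    dInf f g = dInf g f ∧
    dInf f h ≤ dInf f g + dInf g h ∧
    (dInf f g = 0 → equivS f g) := by
  have dle : ∀ (a b : S ℚ) (t : ℚ), 0 < t → t ≤ 1 → |eval a t - eval b t| ≤ dInf a b := by
    intro a b t h0 h1
    have := abs_eval_le_normInf (map2 (· - ·) a b) t h0 h1
    rwa [eval_map2 _ _ _ _ h0 h1] at this
  have dat : ∀ a b : S ℚ, ∃ t : ℚ, 0 < t ∧ t ≤ 1 ∧ |eval a t - eval b t| = dInf a b := by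
    intro a b
    obtain ⟨t, h0, h1, ht⟩ := normInf_attained (map2 (· - ·) a b)
    rw [eval_map2 _ _ _ _ h0 h1] at ht
    exact ⟨t, h0, h1, ht⟩
  have symm : ∀ a b : S ℚ, dInf a b ≤ dInf b a := by
    intro a b
    obtain ⟨t, h0, h1, ht⟩ := dat a b
    rw [← ht, abs_sub_comm]
    exact dle b a t h0 h1
  refine ⟨?_, ?_, le_antisymm (symm f g) (symm g f), ?_, ?_⟩
  · exact le_trans (abs_nonneg _) (dle f g 1 one_pos le_rfl)
  · obtain ⟨t, h0, h1, ht⟩ := dat f f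
    rw [← ht, sub_self, abs_zero]
  · obtain ⟨t, h0, h1, ht⟩ := dat f h
    calc dInf f h = |eval f t - eval h t| := ht.symm
      _ ≤ |eval f t - eval g t| + |eval g t - eval h t| := abs_sub_le _ _ _
      _ ≤ dInf f g + dInf g h := add_le_add (dle f g t h0 h1) (dle g h t h0 h1)
  · intro hd
    apply foldStar_of_eval
    intro t h0 h1
    rw [eval_map2 _ _ _ _ h0 h1]
    have h2 := dle f g t h0 h1
    rw [hd] at h2
    have : eval f t - eval g t = 0 := abs_nonpos_iff.mp h2
    linarith [this]
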